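/- arXiv:1202.5379 — 6 statements merged into one kernel-verified Lean document; each statement's English description precedes it below -/
import Mathlib

section
/- For every t ≥ 0 and x ∈ ℝⁿ, the Laplacian of the weight function satisfies Δ_x ψ(t,x) ≥ ((1+β)(n−α)/((2−α)(2+δ))) · a(x)b(t)/(1+t). -/
noncomputable section

open Real MeasureTheory Filter
open scoped RealInnerProductSpace ENNReal

abbrev E (n : ℕ) : Type := EuclideanSpace ℝ (Fin n)

/-- Japanese bracket `⟨x⟩ = (1+|x|²)^{1/2}`. -/
def jap {n : ℕ} (x : E n) : ℝ := Real.sqrt (1 + ‖x‖ ^ 2)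

/-- Space coefficient `a(x) = a₀ ⟨x⟩^{-α}`. -/
def aco {n : ℕ} (a₀ α : ℝ) (x : E n) : ℝ := a₀ * jap x ^ (-α)

/-- Time coefficient `b(t) = (1+t)^{-β}`. -/
def bco (β t : ℝ) : ℝ := (1 + t) ^ (-β)

/-- The constant `A = (1+β)a₀ / ((2-α)²(2+δ))`. -/
def Aco (a₀ α β δ : ℝ) : ℝ := (1 + β) * a₀ / ((2 - α) ^ 2 * (2 + δ))

/-- The weight `ψ(t,x) = A ⟨x⟩^{2-α}/(1+t)^{1+β}`. -/
def psiW {n : ℕ} (a₀ α β δ : ℝ) (t : ℝ) (x : E n) : ℝ :=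
  Aco a₀ α β δ * jap x ^ (2 - α) / (1 + t) ^ (1 + β)

/-- Laplacian of `f : ℝⁿ → ℝ` as the sum of second partial derivatives. -/
def lap {n : ℕ} (f : E n → ℝ) (x : E n) : ℝ :=
  ∑ i, fderiv ℝ (fun y => fderiv ℝ f y (EuclideanSpace.single i 1)) x (EuclideanSpace.single i 1)

/-- Divergence of a vector field on `ℝⁿ`. -/
def divg {n : ℕ} (V : E n → E n) (x : E n) : ℝ :=
  ∑ i, fderiv ℝ (fun y => V y i) x (EuclideanSpace.single i 1)

section Aux

variable {n : ℕ}

lemma F_pos (y : E n) : (0:ℝ) < 1 + ‖y‖ ^ 2 := by positivity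

lemma hasFDerivAt_F (y : E n) :
    HasFDerivAt (fun z : E n => 1 + ‖z‖ ^ 2) ((2:ℕ) • innerSL ℝ y) y :=
  ((hasStrictFDerivAt_norm_sq y).hasFDerivAt).const_add 1

lemma hasFDerivAt_phi (c p : ℝ) (y : E n) :
    HasFDerivAt (fun z : E n => c * (1 + ‖z‖ ^ 2) ^ p)
      (c • ((p * (1 + ‖y‖ ^ 2) ^ (p - 1)) • ((2:ℕ) • innerSL ℝ y))) y :=
  (((hasFDerivAt_F y).rpow_const (Or.inl (F_pos y).ne')).const_mul c)

lemma inner_single (y : E n) (i : Fin n) : ⟪y, EuclideanSpace.single i (1:ℝ)⟫ = y i := by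
  rw [EuclideanSpace.inner_single_right]; simp

lemma fderiv_phi_apply (c p : ℝ) (y : E n) (i : Fin n) :
    fderiv ℝ (fun z : E n => c * (1 + ‖z‖ ^ 2) ^ p) y (EuclideanSpace.single i 1)
      = (2 * c * p) * ((1 + ‖y‖ ^ 2) ^ (p - 1) * y i) := by
  rw [(hasFDerivAt_phi c p y).fderiv]
  simp only [ContinuousLinearMap.smul_apply, smul_eq_mul, ContinuousLinearMap.coe_smul',
    Pi.smul_apply, innerSL_apply_apply]
  rw [inner_single]
  ring

lemma hasFDerivAt_second (c p : ℝ) (x : E n) (i : Fin n) :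
    HasFDerivAt (fun y : E n => (2 * c * p) * ((1 + ‖y‖ ^ 2) ^ (p - 1) * y i))
      ((2 * c * p) • (((1 + ‖x‖ ^ 2) ^ (p - 1)) • (EuclideanSpace.proj (𝕜 := ℝ) i)
        + (x i) • (((p - 1) * (1 + ‖x‖ ^ 2) ^ (p - 1 - 1)) • ((2:ℕ) • innerSL ℝ x)))) x := by
  have hA : HasFDerivAt (fun y : E n => (1 + ‖y‖ ^ 2) ^ (p - 1))
      (((p - 1) * (1 + ‖x‖ ^ 2) ^ (p - 1 - 1)) • ((2:ℕ) • innerSL ℝ x)) x :=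
    (hasFDerivAt_F x).rpow_const (Or.inl (F_pos x).ne')
  have hB : HasFDerivAt (fun y : E n => y i) (EuclideanSpace.proj (𝕜 := ℝ) i) x :=
    (EuclideanSpace.proj (𝕜 := ℝ) i).hasFDerivAt
  exact (hA.mul hB).const_mul _

lemma norm_sq_eq_sum (x : E n) : ‖x‖ ^ 2 = ∑ i, (x i) ^ 2 := by
  rw [EuclideanSpace.norm_eq, Real.sq_sqrt (by positivity)]
  simp [sq_abs]

lemma lap_formula (c p : ℝ) (x : E n) :
    lap (fun y : E n => c * (1 + ‖y‖ ^ 2) ^ p) x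
      = 2 * c * p * n * (1 + ‖x‖ ^ 2) ^ (p - 1)
        + 4 * c * p * (p - 1) * (1 + ‖x‖ ^ 2) ^ (p - 2) * ‖x‖ ^ 2 := by
  unfold lap
  have hterm : ∀ i : Fin n,
      fderiv ℝ (fun y : E n => fderiv ℝ (fun z : E n => c * (1 + ‖z‖ ^ 2) ^ p) y
        (EuclideanSpace.single i 1)) x (EuclideanSpace.single i 1)
      = 2 * c * p * ((1 + ‖x‖ ^ 2) ^ (p - 1)
          + 2 * (p - 1) * (1 + ‖x‖ ^ 2) ^ (p - 2) * (x i) ^ 2) := by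
    intro i
    have heq : (fun y : E n => fderiv ℝ (fun z : E n => c * (1 + ‖z‖ ^ 2) ^ p) y
        (EuclideanSpace.single i 1))
        = fun y : E n => (2 * c * p) * ((1 + ‖y‖ ^ 2) ^ (p - 1) * y i) := by
      funext y; exact fderiv_phi_apply c p y i
    rw [heq, (hasFDerivAt_second c p x i).fderiv]
    simp only [ContinuousLinearMap.smul_apply, ContinuousLinearMap.add_apply,
      smul_eq_mul, ContinuousLinearMap.coe_smul', Pi.smul_apply, innerSL_apply_apply]
    rw [inner_single]
    have : (EuclideanSpace.proj (𝕜 := ℝ) i) (EuclideanSpace.single i (1:ℝ)) = 1 := by simp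
    rw [this]
    have h21 : p - 1 - 1 = p - 2 := by ring
    rw [h21]; ring
  simp only [hterm, mul_add, Finset.sum_add_distrib, Finset.sum_const, Finset.card_univ,
    Fintype.card_fin, nsmul_eq_mul, ← Finset.mul_sum, ← norm_sq_eq_sum]
  ring

end Aux

/-- lower bound for the Laplacian of the weight function. -/
theorem lap_psiW_ge {n : ℕ} (hn : 1 ≤ n) (a₀ α β δ : ℝ) (ha₀ : 0 < a₀)
    (hα : 0 ≤ α) (hβ : 0 ≤ β) (hαβ : α + β < 1) (hδ : 0 < δ)
    (t : ℝ) (ht : 0 ≤ t) (x : E n) :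
    lap (psiW a₀ α β δ t) x
      ≥ ((1 + β) * ((n : ℝ) - α) / ((2 - α) * (2 + δ))) * (aco a₀ α x * bco β t / (1 + t)) := by
  have hα1 : α < 1 := lt_of_le_of_lt (le_add_of_nonneg_right hβ) hαβ
  have h2α : (0:ℝ) < 2 - α := by linarith
  have h1t : (0:ℝ) < 1 + t := by linarith
  have hT : (0:ℝ) < (1 + t) ^ (1 + β) := Real.rpow_pos_of_pos h1t _
  set p : ℝ := (2 - α) / 2 with hp
  set A : ℝ := Aco a₀ α β δ with hAdef
  have hApos : 0 < A := by
    rw [hAdef, Aco]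
    exact div_pos (by nlinarith) (mul_pos (pow_pos h2α 2) (by linarith))
  set T : ℝ := (1 + t) ^ (1 + β) with hTdef
  have hpsi : psiW a₀ α β δ t = fun y : E n => (A / T) * (1 + ‖y‖ ^ 2) ^ p := by
    funext y
    rw [psiW, jap, Real.sqrt_eq_rpow, ← Real.rpow_mul (F_pos y).le,
      show (1/2 : ℝ) * (2 - α) = p by rw [hp]; ring]
    ring
  have hb : (1 + t) ^ (-β) = (1 + t) / T := by
    rw [eq_div_iff hT.ne', hTdef, ← Real.rpow_add h1t]
    norm_num
  have hRHS : ((1 + β) * ((n : ℝ) - α) / ((2 - α) * (2 + δ))) * (aco a₀ α x * bco β t / (1 + t))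
      = (A * (2 - α) * ((n : ℝ) - α) * ((1 + ‖x‖ ^ 2) ^ (p - 1))) / T := by
    rw [aco, jap, Real.sqrt_eq_rpow, ← Real.rpow_mul (F_pos x).le,
      show (1/2 : ℝ) * (-α) = p - 1 by rw [hp]; ring, bco, hb, hAdef, Aco]
    field_simp
  rw [ge_iff_le, hRHS, hpsi, lap_formula]
  have hF2 : (0:ℝ) < (1 + ‖x‖ ^ 2) ^ (p - 2) := Real.rpow_pos_of_pos (F_pos x) _
  have hF1 : ((1 + ‖x‖ ^ 2) : ℝ) ^ (p - 1) = (1 + ‖x‖ ^ 2) ^ (p - 2) * (1 + ‖x‖ ^ 2) := by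
    rw [show p - 1 = (p - 2) + 1 by ring, Real.rpow_add_one (F_pos x).ne']
  have hn' : (1:ℝ) ≤ (n:ℝ) := by exact_mod_cast hn
  have hmain : A * (2 - α) * ((n : ℝ) - α) * ((1 + ‖x‖ ^ 2) ^ (p - 1))
      ≤ 2 * A * p * (n : ℝ) * ((1 + ‖x‖ ^ 2) ^ (p - 1))
        + 4 * A * p * (p - 1) * ((1 + ‖x‖ ^ 2) ^ (p - 2)) * ‖x‖ ^ 2 := by
    have hdiff : 2 * A * p * (n : ℝ) * ((1 + ‖x‖ ^ 2) ^ (p - 1))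
        + 4 * A * p * (p - 1) * ((1 + ‖x‖ ^ 2) ^ (p - 2)) * ‖x‖ ^ 2
        - A * (2 - α) * ((n : ℝ) - α) * ((1 + ‖x‖ ^ 2) ^ (p - 1))
        = A * (2 - α) * ((1 + ‖x‖ ^ 2) ^ (p - 2)) * α := by
      rw [hF1, hp]; ring
    have hpos : (0:ℝ) ≤ A * (2 - α) * ((1 + ‖x‖ ^ 2) ^ (p - 2)) * α :=
      mul_nonneg (mul_nonneg (mul_nonneg hApos.le h2α.le) hF2.le) hα
    linarith
  calc A * (2 - α) * ((n : ℝ) - α) * ((1 + ‖x‖ ^ 2) ^ (p - 1)) / T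
      ≤ (2 * A * p * (n : ℝ) * ((1 + ‖x‖ ^ 2) ^ (p - 1))
          + 4 * A * p * (p - 1) * ((1 + ‖x‖ ^ 2) ^ (p - 2)) * ‖x‖ ^ 2) / T := by
        gcongr
    _ = 2 * (A / T) * p * (n : ℝ) * ((1 + ‖x‖ ^ 2) ^ (p - 1))
          + 4 * (A / T) * p * (p - 1) * ((1 + ‖x‖ ^ 2) ^ (p - 2)) * ‖x‖ ^ 2 := by
        field_simp
end
end

section
/- For every t ≥ 0 and x ∈ ℝⁿ, (−∂_t ψ(t,x)) · a(x)b(t) ≥ (2+δ) |∇_x ψ(t,x)|². -/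
set_option maxHeartbeats 1000000


noncomputable section

open Real MeasureTheory Filter
open scoped RealInnerProductSpace ENNReal

lemma hasGradientAt_aux {n : ℕ} (k p : ℝ) (x : E n) :
    HasGradientAt (fun y : E n => k * (1 + ‖y‖ ^ 2) ^ p)
      ((k * (p * (1 + ‖x‖ ^ 2) ^ (p - 1)) * 2) • x) x := by
  have hz : (0:ℝ) < 1 + ‖x‖ ^ 2 := by positivity
  have h1 : HasFDerivAt (fun y : E n => 1 + ‖y‖ ^ 2) (2 • innerSL ℝ x) x :=
    (hasStrictFDerivAt_norm_sq x).hasFDerivAt.const_add 1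
  have h2 := (Real.hasDerivAt_rpow_const (x := 1 + ‖x‖ ^ 2) (p := p)
    (Or.inl hz.ne')).comp_hasFDerivAt x h1
  have h3 := h2.const_mul k
  have heq : (InnerProductSpace.toDual ℝ (E n)) ((k * (p * (1 + ‖x‖ ^ 2) ^ (p - 1)) * 2) • x)
      = k • ((p * (1 + ‖x‖ ^ 2) ^ (p - 1)) • (2 • innerSL ℝ x)) := by
    ext y
    simp [InnerProductSpace.toDual_apply_apply, real_inner_smul_left]
    ring
  exact hasGradientAt_iff_hasFDerivAt.2 (heq ▸ h3)

/-- `(-∂_tψ) a(x) b(t) ≥ (2+δ)|∇ψ|²`. -/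
theorem neg_dt_psiW_mul_ab_ge {n : ℕ} (hn : 1 ≤ n) (a₀ α β δ : ℝ) (ha₀ : 0 < a₀)
    (hα : 0 ≤ α) (hβ : 0 ≤ β) (hαβ : α + β < 1) (hδ : 0 < δ)
    (t : ℝ) (ht : 0 ≤ t) (x : E n) :
    (-(deriv (fun s => psiW a₀ α β δ s x) t)) * (aco a₀ α x * bco β t)
      ≥ (2 + δ) * ‖gradient (psiW a₀ α β δ t) x‖ ^ 2 := by
  have hα1 : α < 1 := by linarith
  have hz : (0:ℝ) < 1 + ‖x‖ ^ 2 := by positivity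
  have hT : (0:ℝ) < 1 + t := by linarith
  set z : ℝ := 1 + ‖x‖ ^ 2 with hz_def
  set T : ℝ := 1 + t with hT_def
  set C : ℝ := Aco a₀ α β δ with hC_def
  have hC : 0 < C := by
    rw [hC_def, Aco]
    have : (0:ℝ) < 2 - α := by linarith
    positivity
  -- jap powers to rpow of z
  have hjap : ∀ s : ℝ, jap x ^ s = z ^ (s / 2) := by
    intro s
    rw [jap, Real.sqrt_eq_rpow, ← Real.rpow_mul hz.le]
    congr 1
    ring
  -- time derivative
  set c : ℝ := C * jap x ^ (2 - α) with hc_def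
  have hg : HasDerivAt (fun s : ℝ => (1 + s) ^ (1 + β)) ((1 + β) * T ^ (1 + β - 1)) t := by
    have h0 := Real.hasDerivAt_rpow_const (x := 1 + t) (p := 1 + β)
      (Or.inr (by linarith : (1:ℝ) ≤ 1 + β))
    have hid : HasDerivAt (fun s : ℝ => 1 + s) 1 t := (hasDerivAt_id t).const_add 1
    have h1 := h0.comp t hid
    rw [mul_one] at h1
    exact h1
  have hTβ : T ^ (1 + β) ≠ 0 := by positivity
  have hD : HasDerivAt (fun s => psiW a₀ α β δ s x)
      ((0 * T ^ (1 + β) - c * ((1 + β) * T ^ (1 + β - 1))) / (T ^ (1 + β)) ^ 2) t := by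
    have := (hasDerivAt_const t c).div hg hTβ
    exact this
  rw [hD.deriv]
  -- gradient
  set p : ℝ := (2 - α) / 2 with hp_def
  set k : ℝ := C / T ^ (1 + β) with hk_def
  have hfun : psiW a₀ α β δ t = fun y : E n => k * (1 + ‖y‖ ^ 2) ^ p := by
    funext y
    have hzy : (0:ℝ) < 1 + ‖y‖ ^ 2 := by positivity
    rw [psiW, jap, Real.sqrt_eq_rpow, ← Real.rpow_mul hzy.le]
    rw [hk_def, hp_def]
    have : 1 / 2 * (2 - α) = (2 - α) / 2 := by ring
    rw [this]
    ring
  rw [hfun, (hasGradientAt_aux k p x).gradient, norm_smul]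
  -- simplify rpow atoms
  have hTB : (0:ℝ) < T ^ β := by positivity
  set TB : ℝ := T ^ β with hTB_def
  have e1 : T ^ (1 + β - 1) = TB := by rw [hTB_def]; congr 1; ring
  have e2 : T ^ (1 + β) = T * TB := by
    rw [Real.rpow_add hT, Real.rpow_one]
  have hzA : (0:ℝ) < z ^ (-α / 2) := by positivity
  set zA : ℝ := z ^ (-α / 2) with hzA_def
  have e3 : jap x ^ (-α) = zA := by rw [hjap, hzA_def]
  have e4 : jap x ^ (2 - α) = z * zA := by
    rw [hjap]
    rw [show (2 - α) / 2 = 1 + (-α / 2) by ring, Real.rpow_add hz, Real.rpow_one]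
  have e5 : (1 + ‖x‖ ^ 2) ^ (p - 1) = zA := by
    rw [← hz_def, show p - 1 = -α / 2 by rw [hp_def]; ring]
  rw [aco, bco, ← hT_def, e3, e1, e2, e5]
  rw [Real.rpow_neg hT.le, ← hTB_def]
  rw [hc_def, e4, hk_def, e2]
  have habs : ‖C / (T * TB) * (p * zA) * 2‖ = C / (T * TB) * (p * zA) * 2 := by
    rw [Real.norm_eq_abs, abs_of_nonneg]
    have hp0 : 0 < p := by rw [hp_def]; linarith
    positivity
  rw [habs]
  have hAco : C * ((2 - α) ^ 2 * (2 + δ)) = (1 + β) * a₀ := by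
    rw [hC_def, Aco, div_mul_cancel₀]
    have : (0:ℝ) < 2 - α := by linarith
    positivity
  have hr2 : ‖x‖ ^ 2 ≤ z := by rw [hz_def]; linarith
  have h2p : p * 2 = 2 - α := by rw [hp_def]; ring
  rw [ge_iff_le]
  have key : (2 + δ) * (C / (T * TB) * (p * zA) * 2 * ‖x‖) ^ 2
      = ((2 + δ) * (2 - α) ^ 2 * C) * C * zA ^ 2 * ‖x‖ ^ 2 / (T * TB) ^ 2 := by
    field_simp
    ring_nf
    rw [hp_def]
    ring
  have hAco' : (2 + δ) * (2 - α) ^ 2 * C = (1 + β) * a₀ := by rw [← hAco]; ring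
  rw [key, hAco']
  have hRHS : -((0 * (T * TB) - C * (z * zA) * ((1 + β) * TB)) / (T * TB) ^ 2) * (a₀ * zA * TB⁻¹)
      = (1 + β) * a₀ * C * z * zA ^ 2 / (T * TB) ^ 2 := by
    field_simp
    ring
  rw [hRHS, div_le_div_iff_of_pos_right (by positivity)]
  have hzz : z - ‖x‖ ^ 2 ≥ 0 := by linarith
  nlinarith [mul_nonneg (mul_nonneg (mul_nonneg (mul_nonneg (by linarith : (0:ℝ) ≤ 1 + β) ha₀.le) hC.le) (sq_nonneg zA)) hzz]
end
end

section
/- For every t ≥ 0, x ∈ ℝⁿ, every scalar s ∈ ℝ and every vector V ∈ ℝⁿ, one has (1/(−∂_tψ(t,x))) |(∂_tψ(t,x)) V − s ∇ψ(t,x)|² ≥ (1/5)(−∂_tψ(t,x)) |V|² − (a(x)b(t)/(4(2+δ))) s². -/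
noncomputable section

open Real MeasureTheory Filter
open scoped RealInnerProductSpace ENNReal

lemma jap_rpow {n : ℕ} (y : E n) (e : ℝ) : jap y ^ e = (1 + ‖y‖ ^ 2) ^ (e / 2) := by
  have h : (0:ℝ) ≤ 1 + ‖y‖ ^ 2 := by positivity
  rw [jap, Real.sqrt_eq_rpow, ← Real.rpow_mul h, one_div_mul_eq_div]

lemma quad_aux {n : ℕ} (M ab δ s : ℝ) (V G : E n) (hM : 0 < M) (hδ2 : 0 < 2 + δ)
    (hG : (2 + δ) * ‖G‖ ^ 2 ≤ M * ab) :
    1 / M * ‖(-M) • V - s • G‖ ^ 2 ≥ 1 / 5 * M * ‖V‖ ^ 2 - ab / (4 * (2 + δ)) * s ^ 2 := by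
  have hexp : ‖(-M) • V - s • G‖ ^ 2
      = M ^ 2 * ‖V‖ ^ 2 + 2 * M * (s * ⟪V, G⟫) + s ^ 2 * ‖G‖ ^ 2 := by
    rw [@norm_sub_sq_real, norm_smul, norm_smul, real_inner_smul_left, real_inner_smul_right,
      Real.norm_eq_abs, Real.norm_eq_abs, mul_pow, mul_pow, sq_abs, sq_abs]
    ring
  have hip : -(|s| * (‖V‖ * ‖G‖)) ≤ s * ⟪V, G⟫ := by
    have h1 : |s * ⟪V, G⟫| ≤ |s| * (‖V‖ * ‖G‖) := by
      rw [abs_mul]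
      exact mul_le_mul_of_nonneg_left (abs_real_inner_le_norm _ _) (abs_nonneg s)
    linarith [neg_abs_le (s * ⟪V, G⟫)]
  have hq : ‖G‖ ^ 2 / 4 ≤ ab / (4 * (2 + δ)) * M := by
    rw [show ab / (4 * (2 + δ)) * M = M * ab / (4 * (2 + δ)) by ring,
      le_div_iff₀ (by positivity)]
    nlinarith [hG]
  rw [hexp, ge_iff_le, one_div_mul_eq_div M, le_div_iff₀ hM]
  nlinarith [mul_le_mul_of_nonneg_left hip (by positivity : (0:ℝ) ≤ 2 * M),
    mul_le_mul_of_nonneg_left hq (sq_nonneg s),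
    sq_nonneg (2 * M * ‖V‖ - 5 / 2 * (|s| * ‖G‖)), sq_abs s, hM.le]

lemma psiW_deriv {n : ℕ} (a₀ α β δ t : ℝ) (ht : 0 ≤ t) (x : E n) :
    deriv (fun τ => psiW a₀ α β δ τ x) t
      = -(Aco a₀ α β δ * (1 + ‖x‖ ^ 2) ^ ((2 - α) / 2)
          * ((1 + β) * (1 + t) ^ (-(1 + β) - 1))) := by
  have hT : (0:ℝ) < 1 + t := by linarith
  have hb : HasDerivAt (fun τ : ℝ => 1 + τ) 1 t := (hasDerivAt_id t).const_add 1
  have h2 := hb.rpow_const (p := -(1 + β)) (Or.inl hT.ne')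
  have h3 := h2.const_mul (Aco a₀ α β δ * jap x ^ (2 - α))
  have h1 : HasDerivAt (fun τ : ℝ => Aco a₀ α β δ * jap x ^ (2 - α) * (1 + τ) ^ (-(1 + β)))
      (-(Aco a₀ α β δ * (1 + ‖x‖ ^ 2) ^ ((2 - α) / 2)
          * ((1 + β) * (1 + t) ^ (-(1 + β) - 1)))) t := by
    refine h3.congr_deriv ?_
    rw [jap_rpow]
    ring
  have heq : (fun τ => psiW a₀ α β δ τ x)
      =ᶠ[nhds t] (fun τ : ℝ => Aco a₀ α β δ * jap x ^ (2 - α) * (1 + τ) ^ (-(1 + β))) := by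
    filter_upwards [eventually_gt_nhds (show (-1:ℝ) < t by linarith)] with τ hτ
    rw [psiW, Real.rpow_neg (by linarith), div_eq_mul_inv]
  exact ((h1.congr_of_eventuallyEq heq).deriv :)

lemma psiW_gradient {n : ℕ} (a₀ α β δ t : ℝ) (x : E n) :
    gradient (psiW a₀ α β δ t) x
      = (Aco a₀ α β δ * ((1 + t) ^ (1 + β))⁻¹
          * ((2 - α) * (1 + ‖x‖ ^ 2) ^ ((2 - α) / 2 - 1))) • x := by
  have hN : (0:ℝ) < 1 + ‖x‖ ^ 2 := by positivity
  have hfun : psiW a₀ α β δ t = fun y : E n =>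
      Aco a₀ α β δ * ((1 + t) ^ (1 + β))⁻¹ * (1 + ‖y‖ ^ 2) ^ ((2 - α) / 2) := by
    funext y
    rw [psiW, jap_rpow, div_eq_mul_inv]
    ring
  have h0 : HasFDerivAt (fun y : E n => 1 + ‖y‖ ^ 2) (2 • (innerSL ℝ x)) x := by
    have := (hasFDerivAt_id x).norm_sq
    simpa using this.const_add 1
  have h1 := h0.rpow_const (p := (2 - α) / 2) (Or.inl hN.ne')
  have h2 := h1.const_mul (Aco a₀ α β δ * ((1 + t) ^ (1 + β))⁻¹)
  have h3 : HasGradientAt (fun y : E n =>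
      Aco a₀ α β δ * ((1 + t) ^ (1 + β))⁻¹ * (1 + ‖y‖ ^ 2) ^ ((2 - α) / 2))
      ((Aco a₀ α β δ * ((1 + t) ^ (1 + β))⁻¹
          * ((2 - α) * (1 + ‖x‖ ^ 2) ^ ((2 - α) / 2 - 1))) • x) x := by
    rw [hasGradientAt_iff_hasFDerivAt]
    refine h2.congr_fderiv ?_
    apply ContinuousLinearMap.ext
    intro v
    simp [InnerProductSpace.toDual_apply_apply, real_inner_smul_left, two_smul]
    ring
  rw [hfun]
  exact h3.gradient

lemma grad_bound {n : ℕ} (a₀ α β δ t : ℝ) (ha₀ : 0 < a₀) (hα1 : α < 1)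
    (hβ : 0 ≤ β) (hδ : 0 < δ) (ht : 0 ≤ t) (x : E n) :
    (2 + δ) * ‖(Aco a₀ α β δ * ((1 + t) ^ (1 + β))⁻¹
          * ((2 - α) * (1 + ‖x‖ ^ 2) ^ ((2 - α) / 2 - 1))) • x‖ ^ 2
      ≤ (Aco a₀ α β δ * (1 + ‖x‖ ^ 2) ^ ((2 - α) / 2)
          * ((1 + β) * (1 + t) ^ (-(1 + β) - 1))) * (aco a₀ α x * bco β t) := by
  have hT : (0:ℝ) < 1 + t := by linarith
  have hN : (0:ℝ) < 1 + ‖x‖ ^ 2 := by positivity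
  set c : ℝ := Aco a₀ α β δ * ((1 + t) ^ (1 + β))⁻¹
      * ((2 - α) * (1 + ‖x‖ ^ 2) ^ ((2 - α) / 2 - 1)) with hc
  have hnrm : ‖c • x‖ ^ 2 = c ^ 2 * ‖x‖ ^ 2 := by
    rw [norm_smul, Real.norm_eq_abs, mul_pow, sq_abs]
  rw [hnrm]
  have hxN : ‖x‖ ^ 2 ≤ 1 + ‖x‖ ^ 2 := by linarith
  have step1 : (2 + δ) * (c ^ 2 * ‖x‖ ^ 2) ≤ (2 + δ) * (c ^ 2 * (1 + ‖x‖ ^ 2)) := by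
    have h2 : (0:ℝ) ≤ (2 + δ) * c ^ 2 := by positivity
    calc (2 + δ) * (c ^ 2 * ‖x‖ ^ 2) = (2 + δ) * c ^ 2 * ‖x‖ ^ 2 := by ring
      _ ≤ (2 + δ) * c ^ 2 * (1 + ‖x‖ ^ 2) := mul_le_mul_of_nonneg_left hxN h2
      _ = (2 + δ) * (c ^ 2 * (1 + ‖x‖ ^ 2)) := by ring
  refine le_trans step1 (le_of_eq ?_)
  have hQQ : (1 + ‖x‖ ^ 2) ^ ((2 - α) / 2 - 1) * (1 + ‖x‖ ^ 2) ^ ((2 - α) / 2 - 1)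
        * (1 + ‖x‖ ^ 2)
      = (1 + ‖x‖ ^ 2) ^ ((2 - α) / 2) * (1 + ‖x‖ ^ 2) ^ (-α / 2) := by
    rw [← Real.rpow_add hN, ← Real.rpow_add_one hN.ne', ← Real.rpow_add hN]
    congr 1; ring
  have hS : ((1 + t) ^ (1 + β))⁻¹ * ((1 + t) ^ (1 + β))⁻¹
      = (1 + t) ^ (-(1 + β) - 1) * (1 + t) ^ (-β) := by
    rw [← Real.rpow_neg hT.le, ← Real.rpow_add hT, ← Real.rpow_add hT]
    congr 1; ring
  have hKey : Aco a₀ α β δ * ((2 - α) ^ 2 * (2 + δ)) = (1 + β) * a₀ := by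
    rw [Aco, div_mul_cancel₀]
    have h1 : (0:ℝ) < 2 - α := by linarith
    positivity
  rw [hc, aco, bco, jap_rpow]
  linear_combination
    ((2 + δ) * Aco a₀ α β δ ^ 2 * (2 - α) ^ 2
        * (((1 + t) ^ (1 + β))⁻¹ * ((1 + t) ^ (1 + β))⁻¹)) * hQQ
    + ((2 + δ) * Aco a₀ α β δ ^ 2 * (2 - α) ^ 2
        * ((1 + ‖x‖ ^ 2) ^ ((2 - α) / 2) * (1 + ‖x‖ ^ 2) ^ (-α / 2))) * hS
    + (((1 + t) ^ (-(1 + β) - 1) * (1 + t) ^ (-β))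
        * ((1 + ‖x‖ ^ 2) ^ ((2 - α) / 2) * (1 + ‖x‖ ^ 2) ^ (-α / 2))
        * Aco a₀ α β δ) * hKey

/-- the key pointwise quadratic-form estimate used to treat the term `T₁`. -/
theorem quadratic_estimate {n : ℕ} (hn : 1 ≤ n) (a₀ α β δ : ℝ) (ha₀ : 0 < a₀)
    (hα : 0 ≤ α) (hβ : 0 ≤ β) (hαβ : α + β < 1) (hδ : 0 < δ)
    (t : ℝ) (ht : 0 ≤ t) (x : E n) (s : ℝ) (V : E n) :
    (1 / (-(deriv (fun τ => psiW a₀ α β δ τ x) t))) *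
        ‖(deriv (fun τ => psiW a₀ α β δ τ x) t) • V - s • gradient (psiW a₀ α β δ t) x‖ ^ 2
      ≥ (1 / 5) * (-(deriv (fun τ => psiW a₀ α β δ τ x) t)) * ‖V‖ ^ 2
        - (aco a₀ α x * bco β t / (4 * (2 + δ))) * s ^ 2 := by
  have hα1 : α < 1 := by linarith
  have hT : (0:ℝ) < 1 + t := by linarith
  have hN : (0:ℝ) < 1 + ‖x‖ ^ 2 := by positivity
  have hA : 0 < Aco a₀ α β δ := by
    rw [Aco]
    have h1 : (0:ℝ) < 2 - α := by linarith
    positivity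
  have hM : 0 < Aco a₀ α β δ * (1 + ‖x‖ ^ 2) ^ ((2 - α) / 2)
      * ((1 + β) * (1 + t) ^ (-(1 + β) - 1)) :=
    mul_pos (mul_pos hA (Real.rpow_pos_of_pos hN _))
      (mul_pos (by linarith) (Real.rpow_pos_of_pos hT _))
  rw [psiW_deriv a₀ α β δ t ht x, psiW_gradient a₀ α β δ t x, neg_neg]
  exact quad_aux _ _ δ s V _ hM (by linarith)
    (grad_bound a₀ α β δ t ha₀ hα1 hβ hδ ht x)
end
end

section
/- Assume 0 < δ < 1 and set δ₂ := δ/6 − δ²/6 and δ₃ := min(1 − 4/(4+δ₂), δ₂) (both positive). Then for every t ≥ 0, x ∈ ℝⁿ, every scalar r ∈ ℝ and every vector V ∈ ℝⁿ: |V|² + 4 r V·∇ψ(t,x) + ( (−∂_tψ(t,x)) a(x)b(t) + 2|∇ψ(t,x)|² ) r² ≥ δ₃ ( |V|² + |∇ψ(t,x)|² r² ) + (δ/3)(−∂_tψ(t,x)) a(x)b(t) r². -/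
noncomputable section

open Real MeasureTheory Filter
open scoped RealInnerProductSpace ENNReal

lemma grad_psiW {n : ℕ} (a₀ α β δ t : ℝ) (x : E n) :
    HasGradientAt (psiW a₀ α β δ t)
      (((Aco a₀ α β δ / (1 + t) ^ (1 + β)) * ((2 - α) * (1 + ‖x‖ ^ 2) ^ (-α / 2 : ℝ))) • x) x := by
  have hu0 : (0:ℝ) < 1 + ‖x‖ ^ 2 := by positivity
  have hu : HasFDerivAt (fun y : E n => 1 + ‖y‖ ^ 2)
      (2 • (innerSL ℝ x)) x := by
    simpa using ((hasFDerivAt_id x).norm_sq).const_add 1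
  have hpow : HasDerivAt (fun u : ℝ => u ^ ((2 - α) / 2 : ℝ))
      (((2 - α) / 2) * (1 + ‖x‖ ^ 2) ^ ((2 - α) / 2 - 1 : ℝ)) (1 + ‖x‖ ^ 2) :=
    Real.hasDerivAt_rpow_const (Or.inl (ne_of_gt hu0))
  have hF : HasFDerivAt (fun y : E n => (Aco a₀ α β δ / (1 + t) ^ (1 + β)) * (1 + ‖y‖ ^ 2) ^ ((2 - α) / 2 : ℝ))
      ((Aco a₀ α β δ / (1 + t) ^ (1 + β)) • ((((2 - α) / 2) * (1 + ‖x‖ ^ 2) ^ ((2 - α) / 2 - 1 : ℝ)) • (2 • (innerSL ℝ x)))) x :=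
    (hpow.comp_hasFDerivAt x hu).const_mul _
  have hfun : (fun y : E n => (Aco a₀ α β δ / (1 + t) ^ (1 + β)) * (1 + ‖y‖ ^ 2) ^ ((2 - α) / 2 : ℝ))
      = psiW a₀ α β δ t := by
    funext y
    have h1 : jap y ^ (2 - α : ℝ) = (1 + ‖y‖ ^ 2) ^ ((2 - α) / 2 : ℝ) := by
      rw [jap, Real.sqrt_eq_rpow, ← Real.rpow_mul (by positivity)]
      congr 1; ring
    rw [psiW, h1]; ring
  rw [hasGradientAt_iff_hasFDerivAt]
  rw [hfun] at hF
  convert hF using 1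
  rotate_left 3
  ext y
  simp only [InnerProductSpace.toDual_apply_apply, real_inner_smul_left,
    ContinuousLinearMap.smul_apply, ContinuousLinearMap.coe_smul', Pi.smul_apply, innerSL_apply_apply,
    smul_eq_mul]
  have h2 : (1 + ‖x‖ ^ 2 : ℝ) ^ ((2 - α) / 2 - 1 : ℝ) = (1 + ‖x‖ ^ 2) ^ (-α / 2 : ℝ) := by
    congr 1; ring
  rw [h2]; ring
  all_goals rfl

lemma hasDeriv_psiW {n : ℕ} (a₀ α β δ t : ℝ) (ht : 0 ≤ t) (x : E n) :
    HasDerivAt (fun τ => psiW a₀ α β δ τ x)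
      (-(Aco a₀ α β δ * jap x ^ (2 - α : ℝ) * ((1 + β) * (1 + t) ^ (β : ℝ))) / ((1 + t) ^ (1 + β : ℝ)) ^ 2) t := by
  have hs0 : (0:ℝ) < 1 + t := by linarith
  have h1 : HasDerivAt (fun τ : ℝ => 1 + τ) 1 t := by
    simpa using (hasDerivAt_id t).const_add (1:ℝ)
  have hg : HasDerivAt (fun τ : ℝ => (1 + τ) ^ (1 + β : ℝ))
      (((1 + β) * (1 + t) ^ (1 + β - 1 : ℝ)) * 1) t :=
    (Real.hasDerivAt_rpow_const (Or.inl (ne_of_gt hs0))).comp t h1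
  have hGne : ((1 + t : ℝ) ^ (1 + β : ℝ)) ≠ 0 := ne_of_gt (Real.rpow_pos_of_pos hs0 _)
  have := (hasDerivAt_const t (Aco a₀ α β δ * jap x ^ (2 - α : ℝ))).div hg hGne
  rw [show (1 + β - 1 : ℝ) = β by ring] at this
  convert this using 2
  all_goals first
    | rfl
    | ring
    | (funext τ; rw [psiW]; ring)


set_option maxHeartbeats 1000000 in
/-- the pointwise quadratic-form estimate used to treat the term `T₃`. -/
theorem quadratic_estimate_T3 {n : ℕ} (hn : 1 ≤ n) (a₀ α β δ : ℝ) (ha₀ : 0 < a₀)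
    (hα : 0 ≤ α) (hβ : 0 ≤ β) (hαβ : α + β < 1) (hδ : 0 < δ) (hδ1 : δ < 1)
    (t : ℝ) (ht : 0 ≤ t) (x : E n) (r : ℝ) (V : E n) :
    ‖V‖ ^ 2 + 4 * r * ⟪V, gradient (psiW a₀ α β δ t) x⟫
        + ((-(deriv (fun τ => psiW a₀ α β δ τ x) t)) * (aco a₀ α x * bco β t)
            + 2 * ‖gradient (psiW a₀ α β δ t) x‖ ^ 2) * r ^ 2
      ≥ min (1 - 4 / (4 + (δ / 6 - δ ^ 2 / 6))) (δ / 6 - δ ^ 2 / 6) *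
            (‖V‖ ^ 2 + ‖gradient (psiW a₀ α β δ t) x‖ ^ 2 * r ^ 2)
        + (δ / 3) * (-(deriv (fun τ => psiW a₀ α β δ τ x) t)) * (aco a₀ α x * bco β t) * r ^ 2 := by
  have hα2 : α < 2 := by linarith
  have hs0 : (0:ℝ) < 1 + t := by linarith
  have hu0 : (0:ℝ) < 1 + ‖x‖ ^ 2 := by positivity
  have h2α : (0:ℝ) < 2 - α := by linarith
  have hA : 0 < Aco a₀ α β δ := by
    rw [Aco]
    apply div_pos (by positivity)
    positivity
  -- value of the gradient
  set κ : ℝ := (Aco a₀ α β δ / (1 + t) ^ (1 + β)) * ((2 - α) * (1 + ‖x‖ ^ 2) ^ (-α / 2 : ℝ)) with hκ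
  have hgrad : gradient (psiW a₀ α β δ t) x = κ • x := (grad_psiW a₀ α β δ t x).gradient
  have hderiv : deriv (fun τ => psiW a₀ α β δ τ x) t
      = -(Aco a₀ α β δ * jap x ^ (2 - α : ℝ) * ((1 + β) * (1 + t) ^ (β : ℝ))) / ((1 + t) ^ (1 + β : ℝ)) ^ 2 :=
    (hasDeriv_psiW a₀ α β δ t ht x).deriv
  -- abbreviations
  set Q : ℝ := (-(deriv (fun τ => psiW a₀ α β δ τ x) t)) * (aco a₀ α x * bco β t) with hQdef
  have hnormG : ‖gradient (psiW a₀ α β δ t) x‖ ^ 2 = κ ^ 2 * ‖x‖ ^ 2 := by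
    rw [hgrad, norm_smul, mul_pow, Real.norm_eq_abs, sq_abs]
  -- key inequality Q ≥ (2+δ) ‖∇ψ‖²
  have hQ : Q ≥ (2 + δ) * (κ ^ 2 * ‖x‖ ^ 2) := by
    have hjap2 : jap x ^ (2 - α : ℝ) = (1 + ‖x‖ ^ 2) ^ ((2 - α) / 2 : ℝ) := by
      rw [jap, Real.sqrt_eq_rpow, ← Real.rpow_mul (by positivity)]
      congr 1; ring
    have hjapα : jap x ^ (-α : ℝ) = (1 + ‖x‖ ^ 2) ^ (-α / 2 : ℝ) := by
      rw [jap, Real.sqrt_eq_rpow, ← Real.rpow_mul (by positivity)]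
      congr 1; ring
    have hsβ : (1 + t : ℝ) ^ (β : ℝ) * (1 + t) ^ (-β : ℝ) = 1 := by
      rw [← Real.rpow_add hs0]; simp
    have hup : ∀ p : ℝ, (0:ℝ) < (1 + ‖x‖ ^ 2) ^ p := fun p => Real.rpow_pos_of_pos hu0 p
    have hsp : ∀ p : ℝ, (0:ℝ) < (1 + t) ^ p := fun p => Real.rpow_pos_of_pos hs0 p
    have hAid : (2 + δ) * (2 - α) ^ 2 * Aco a₀ α β δ = (1 + β) * a₀ := by
      have h1 : (2 - α : ℝ) ≠ 0 := ne_of_gt h2α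
      have h2 : (2 + δ : ℝ) ≠ 0 := by positivity
      rw [Aco]; field_simp
    have hexp : (1 + ‖x‖ ^ 2 : ℝ) ^ ((2 - α) / 2 : ℝ) * (1 + ‖x‖ ^ 2) ^ (-α / 2 : ℝ)
        = (1 + ‖x‖ ^ 2) ^ (-α / 2 : ℝ) * ((1 + ‖x‖ ^ 2) ^ (-α / 2 : ℝ) * (1 + ‖x‖ ^ 2)) := by
      calc (1 + ‖x‖ ^ 2 : ℝ) ^ ((2 - α) / 2 : ℝ) * (1 + ‖x‖ ^ 2) ^ (-α / 2 : ℝ)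
          = (1 + ‖x‖ ^ 2 : ℝ) ^ ((2 - α) / 2 + (-α / 2) : ℝ) := (Real.rpow_add hu0 _ _).symm
        _ = (1 + ‖x‖ ^ 2 : ℝ) ^ ((-α / 2) + ((-α / 2) + 1) : ℝ) := by
            rw [show ((2 - α) / 2 + (-α / 2) : ℝ) = (-α / 2) + ((-α / 2) + 1) by ring]
        _ = (1 + ‖x‖ ^ 2) ^ (-α / 2 : ℝ) * ((1 + ‖x‖ ^ 2) ^ (-α / 2 : ℝ) * (1 + ‖x‖ ^ 2) ^ (1 : ℝ)) := by
            rw [Real.rpow_add hu0, Real.rpow_add hu0]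
        _ = (1 + ‖x‖ ^ 2) ^ (-α / 2 : ℝ) * ((1 + ‖x‖ ^ 2) ^ (-α / 2 : ℝ) * (1 + ‖x‖ ^ 2)) := by
            rw [Real.rpow_one]
    have hx2 : ‖x‖ ^ 2 ≤ 1 + ‖x‖ ^ 2 := by linarith
    rw [hQdef, hderiv, aco, bco, hjap2, hjapα, hκ, ge_iff_le]
    set P : ℝ := (1 + ‖x‖ ^ 2) ^ (-α / 2 : ℝ) with hP
    set U2 : ℝ := (1 + ‖x‖ ^ 2) ^ ((2 - α) / 2 : ℝ) with hU2
    set S : ℝ := (1 + t) ^ (1 + β : ℝ) with hS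
    set sb : ℝ := (1 + t) ^ (β : ℝ) with hsb
    set smb : ℝ := (1 + t) ^ (-β : ℝ) with hsmb
    clear_value P U2 S sb smb
    have hS2 : (0:ℝ) < S ^ 2 := by rw [hS]; positivity
    have hL : (2 + δ) * ((Aco a₀ α β δ / S * ((2 - α) * P)) ^ 2 * ‖x‖ ^ 2)
        = ((2 + δ) * ((Aco a₀ α β δ * ((2 - α) * P)) ^ 2 * ‖x‖ ^ 2)) / S ^ 2 := by
      field_simp
      try ring
    have hR : -(-(Aco a₀ α β δ * U2 * ((1 + β) * sb)) / S ^ 2) * (a₀ * P * smb)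
        = (Aco a₀ α β δ * U2 * ((1 + β) * sb) * (a₀ * P * smb)) / S ^ 2 := by
      ring
    rw [hL, hR, div_le_div_iff₀ hS2 hS2]
    have e1 : Aco a₀ α β δ * U2 * ((1 + β) * sb) * (a₀ * P * smb) * S ^ 2
        = (((1 + β) * a₀) * Aco a₀ α β δ * ((U2 * P) * (sb * smb))) * S ^ 2 := by ring
    rw [e1, hsβ, hexp, mul_one, ← hAid]
    have hkey : 0 ≤ ((2 + δ) * (2 - α) ^ 2 * Aco a₀ α β δ ^ 2 * P ^ 2 * ((1 + ‖x‖ ^ 2) - ‖x‖ ^ 2)) * S ^ 2 := by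
      have h1 : (0:ℝ) ≤ (1 + ‖x‖ ^ 2) - ‖x‖ ^ 2 := by linarith
      have h2 : (0:ℝ) < P := by rw [hP]; exact hup _
      positivity
    linarith [hkey]
  -- the purely algebraic part
  set δ2 : ℝ := δ / 6 - δ ^ 2 / 6 with hδ2def
  have hδ2 : 0 < δ2 := by rw [hδ2def]; nlinarith
  set m : ℝ := min (1 - 4 / (4 + δ2)) δ2 with hm
  have hm1 : m ≤ 1 - 4 / (4 + δ2) := min_le_left _ _
  have hm2 : m ≤ δ2 := min_le_right _ _
  have h4δ2 : (0:ℝ) < 4 + δ2 := by linarith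
  have hmA : 4 ≤ (1 - m) * (4 + δ2) := by
    have : 4 / (4 + δ2) ≤ 1 - m := by linarith
    calc (4:ℝ) = (4 / (4 + δ2)) * (4 + δ2) := by field_simp
    _ ≤ (1 - m) * (4 + δ2) := by
        apply mul_le_mul_of_nonneg_right this (le_of_lt h4δ2)
  have hm0 : 0 < 1 - m := by nlinarith [div_pos (by norm_num : (0:ℝ) < 4) h4δ2]
  set v : ℝ := ‖V‖ with hv
  set G : E n := gradient (psiW a₀ α β δ t) x with hG
  set w : ℝ := ‖G‖ with hw
  have hw2 : w ^ 2 = κ ^ 2 * ‖x‖ ^ 2 := hnormG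
  have hQ' : Q ≥ (2 + δ) * w ^ 2 := by rw [hw2]; exact hQ
  have hv0 : 0 ≤ v := norm_nonneg _
  have hw0 : 0 ≤ w := norm_nonneg _
  set rr : ℝ := |r| with hrr
  clear_value δ2 m v w rr
  have hrr0 : 0 ≤ rr := by rw [hrr]; exact abs_nonneg _
  have hip : r * ⟪V, G⟫ ≥ -(rr * (v * w)) := by
    have h1 : |⟪V, G⟫| ≤ v * w := by rw [hv, hw]; exact abs_real_inner_le_norm V G
    have h2 : |r * ⟪V, G⟫| ≤ rr * (v * w) := by
      rw [abs_mul, hrr]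
      exact mul_le_mul_of_nonneg_left h1 (abs_nonneg r)
    linarith [neg_abs_le (r * ⟪V, G⟫)]
  have hr2 : r ^ 2 = rr ^ 2 := by rw [hrr]; exact (sq_abs r).symm
  -- key quadratic estimate
  have hkey : 0 ≤ (1 - m) * v ^ 2 - 4 * (rr * (v * w)) + (4 + δ2) * (w ^ 2 * rr ^ 2) := by
    have hc : 0 ≤ (1 - m) * (4 + δ2) - 4 := by linarith
    have h1 : 0 ≤ ((1 - m) * v - 2 * (rr * w)) ^ 2 + ((1 - m) * (4 + δ2) - 4) * (rr * w) ^ 2 :=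
      add_nonneg (sq_nonneg _) (mul_nonneg hc (sq_nonneg _))
    have h2 : ((1 - m) * v - 2 * (rr * w)) ^ 2 + ((1 - m) * (4 + δ2) - 4) * (rr * w) ^ 2
        = (1 - m) * ((1 - m) * v ^ 2 - 4 * (rr * (v * w)) + (4 + δ2) * (w ^ 2 * rr ^ 2)) := by
      ring
    have h3 : (1 - m) * 0 ≤ (1 - m) * ((1 - m) * v ^ 2 - 4 * (rr * (v * w)) + (4 + δ2) * (w ^ 2 * rr ^ 2)) := by
      rw [mul_zero, ← h2]; exact h1
    exact le_of_mul_le_mul_left (by simpa using h3) hm0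
  have h5a : Q * (1 - δ / 3) ≥ (2 + 2 * δ2) * w ^ 2 := by
    have h1 : (0:ℝ) < 1 - δ / 3 := by linarith
    have h2 : Q * (1 - δ / 3) ≥ ((2 + δ) * w ^ 2) * (1 - δ / 3) :=
      mul_le_mul_of_nonneg_right hQ' (le_of_lt h1)
    have h3 : ((2 + δ) * w ^ 2) * (1 - δ / 3) = (2 + 2 * δ2) * w ^ 2 := by
      rw [hδ2def]; ring
    linarith
  have h5b : Q * (1 - δ / 3) + (2 - m) * w ^ 2 ≥ (4 + δ2) * w ^ 2 := by
    have := mul_le_mul_of_nonneg_right hm2 (sq_nonneg w)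
    linarith
  have h5 : (Q * (1 - δ / 3) + (2 - m) * w ^ 2) * rr ^ 2 ≥ (4 + δ2) * (w ^ 2 * rr ^ 2) := by
    have := mul_le_mul_of_nonneg_right h5b (sq_nonneg rr)
    linarith
  have hQr : (δ / 3) * (-(deriv (fun τ => psiW a₀ α β δ τ x) t)) * (aco a₀ α x * bco β t) * r ^ 2
      = (δ / 3) * Q * rr ^ 2 := by rw [hQdef, hr2]; ring
  rw [hQr, hr2]
  linarith [hkey, hip, h5]
end
end

section
/- Let p > 1. There exists a constant C > 0, depending only on p, α, β, a₀, δ, such that for all t ≥ 0 and x ∈ ℝⁿ, e^{(4/(p+1))ψ(t,x)} ≤ C (1+t)^{β + (1+β)α/(2−α)} e^{2ψ(t,x)} a(x) b(t). Equivalently, a(x)^{−1} b(t)^{−1} e^{(4/(p+1) − 2)ψ(t,x)} ≤ C (1+t)^{β + (1+β)α/(2−α)}. -/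
noncomputable section

open Real MeasureTheory Filter
open scoped RealInnerProductSpace ENNReal

/-- comparing the weight `e^{(4/(p+1))ψ}` with `e^{2ψ} a(x) b(t)`. -/
theorem weight_comparison {n : ℕ} (hn : 1 ≤ n) (a₀ α β δ p : ℝ) (ha₀ : 0 < a₀)
    (hα : 0 ≤ α) (hβ : 0 ≤ β) (hαβ : α + β < 1) (hδ : 0 < δ) (hp : 1 < p) :
    ∃ C > 0, ∀ t : ℝ, 0 ≤ t → ∀ x : E n,
      Real.exp ((4 / (p + 1)) * psiW a₀ α β δ t x)
        ≤ C * (1 + t) ^ (β + (1 + β) * α / (2 - α)) *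
            (Real.exp (2 * psiW a₀ α β δ t x) * (aco a₀ α x * bco β t)) ∧
      (aco a₀ α x)⁻¹ * (bco β t)⁻¹ * Real.exp ((4 / (p + 1) - 2) * psiW a₀ α β δ t x)
        ≤ C * (1 + t) ^ (β + (1 + β) * α / (2 - α)) := by

  have hα1 : α < 1 := by linarith
  have h2α : (0:ℝ) < 2 - α := by linarith
  have hA : 0 < Aco a₀ α β δ := by
    unfold Aco
    exact div_pos (by positivity) (mul_pos (pow_pos h2α 2) (by linarith))
  have hε : (0:ℝ) < 2 - 4 / (p + 1) := by
    have hp1 : (0:ℝ) < p + 1 := by linarith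
    rw [sub_pos, div_lt_iff₀ hp1]; linarith
  set γ := α / (2 - α) with hγdef
  have hγ0 : 0 ≤ γ := div_nonneg hα h2α.le
  have hγ1 : γ ≤ 1 := by rw [hγdef, div_le_one h2α]; linarith
  set c := (2 - 4 / (p + 1)) * Aco a₀ α β δ with hcdef
  have hc : 0 < c := mul_pos hε hA
  have hCpos : 0 < c ^ (-γ) / a₀ := div_pos (Real.rpow_pos_of_pos hc _) ha₀
  have key : ∀ v : ℝ, 0 ≤ v → v ^ γ ≤ Real.exp v := by
    intro v hv
    rcases le_or_gt v 1 with h | h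
    · exact (Real.rpow_le_one hv h hγ0).trans (Real.one_le_exp hv)
    · calc v ^ γ ≤ v ^ (1:ℝ) := Real.rpow_le_rpow_of_exponent_le h.le hγ1
        _ = v := Real.rpow_one v
        _ ≤ Real.exp v := by linarith [Real.add_one_le_exp v]
  refine ⟨c ^ (-γ) / a₀, hCpos, ?_⟩
  intro t ht x
  have ht1 : (0:ℝ) < 1 + t := by linarith
  have hr1 : 1 ≤ jap x := by
    have h := Real.sqrt_le_sqrt (show (1:ℝ) ≤ 1 + ‖x‖ ^ 2 from
      le_add_of_nonneg_right (by positivity))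
    simpa [jap] using h
  have hr0 : 0 < jap x := lt_of_lt_of_le one_pos hr1
  set r := jap x with hrdef
  set T := (1 + t) ^ (1 + β) with hTdef
  have hT0 : 0 < T := Real.rpow_pos_of_pos ht1 _
  -- core estimate
  set u := r ^ (2 - α) / T with hudef
  have hu : 0 ≤ u := div_nonneg (Real.rpow_nonneg hr0.le _) hT0.le
  have hru : r ^ (2 - α) = u * T := by
    rw [hudef, div_mul_cancel₀ _ hT0.ne']
  have hrα : r ^ α = u ^ γ * T ^ γ := by
    have h1 : α = (2 - α) * γ := by
      rw [hγdef]; field_simp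
    rw [h1, Real.rpow_mul hr0.le, hru, Real.mul_rpow hu hT0.le]
  have hexp_le : u ^ γ * Real.exp (-(c * u)) ≤ c ^ (-γ) := by
    have h1 : c ^ γ * u ^ γ ≤ Real.exp (c * u) := by
      rw [← Real.mul_rpow hc.le hu]; exact key _ (mul_nonneg hc.le hu)
    have hcγ : 0 < c ^ γ := Real.rpow_pos_of_pos hc _
    have h2 : u ^ γ ≤ (c ^ γ)⁻¹ * Real.exp (c * u) := by
      rw [le_inv_mul_iff₀ hcγ]; exact h1
    calc u ^ γ * Real.exp (-(c * u))
        ≤ ((c ^ γ)⁻¹ * Real.exp (c * u)) * Real.exp (-(c * u)) :=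
          mul_le_mul_of_nonneg_right h2 (Real.exp_pos _).le
      _ = (c ^ γ)⁻¹ * (Real.exp (c * u) * Real.exp (-(c * u))) := by ring
      _ = (c ^ γ)⁻¹ := by rw [← Real.exp_add]; simp
      _ = c ^ (-γ) := (Real.rpow_neg hc.le γ).symm
  have hmain : r ^ α * Real.exp (-(c * u)) ≤ c ^ (-γ) * T ^ γ := by
    rw [hrα]
    calc u ^ γ * T ^ γ * Real.exp (-(c * u))
        = (u ^ γ * Real.exp (-(c * u))) * T ^ γ := by ring
      _ ≤ c ^ (-γ) * T ^ γ :=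
          mul_le_mul_of_nonneg_right hexp_le (Real.rpow_nonneg hT0.le _)
  -- arguments of exp
  have harg : (4 / (p + 1) - 2) * psiW a₀ α β δ t x = -(c * u) := by
    rw [psiW, hcdef, hudef, ← hrdef, ← hTdef]; ring
  -- RHS decomposition
  have hrhs : (1 + t) ^ (β + (1 + β) * α / (2 - α))
      = (1 + t) ^ β * T ^ γ := by
    rw [hTdef, ← Real.rpow_mul ht1.le, ← Real.rpow_add ht1]
    congr 1
    rw [hγdef]; ring
  have hbp : 0 < (1 + t) ^ β := Real.rpow_pos_of_pos ht1 _
  have hapos : 0 < aco a₀ α x := mul_pos ha₀ (Real.rpow_pos_of_pos hr0 _)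
  have hbpos : 0 < bco β t := Real.rpow_pos_of_pos ht1 _
  -- second inequality
  have h2 : (aco a₀ α x)⁻¹ * (bco β t)⁻¹ * Real.exp ((4 / (p + 1) - 2) * psiW a₀ α β δ t x)
      ≤ c ^ (-γ) / a₀ * (1 + t) ^ (β + (1 + β) * α / (2 - α)) := by
    rw [harg, hrhs, aco, bco, ← hrdef, mul_inv, Real.rpow_neg hr0.le, inv_inv,
      Real.rpow_neg ht1.le, inv_inv]
    have step := mul_le_mul_of_nonneg_left hmain
      (show (0:ℝ) ≤ a₀⁻¹ * (1 + t) ^ β from by positivity)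
    calc a₀⁻¹ * r ^ α * (1 + t) ^ β * Real.exp (-(c * u))
        = a₀⁻¹ * (1 + t) ^ β * (r ^ α * Real.exp (-(c * u))) := by ring
      _ ≤ a₀⁻¹ * (1 + t) ^ β * (c ^ (-γ) * T ^ γ) := step
      _ = c ^ (-γ) / a₀ * ((1 + t) ^ β * T ^ γ) := by ring
  refine ⟨?_, h2⟩
  -- first inequality from the second
  have hsplit : (4 / (p + 1)) * psiW a₀ α β δ t x
      = (4 / (p + 1) - 2) * psiW a₀ α β δ t x + 2 * psiW a₀ α β δ t x := by ring
  have h3 : Real.exp ((4 / (p + 1) - 2) * psiW a₀ α β δ t x)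
      ≤ c ^ (-γ) / a₀ * (1 + t) ^ (β + (1 + β) * α / (2 - α)) * (aco a₀ α x * bco β t) := by
    have hstep := mul_le_mul_of_nonneg_right h2 (mul_pos hapos hbpos).le
    calc Real.exp ((4 / (p + 1) - 2) * psiW a₀ α β δ t x)
        = (aco a₀ α x)⁻¹ * (bco β t)⁻¹ * Real.exp ((4 / (p + 1) - 2) * psiW a₀ α β δ t x)
            * (aco a₀ α x * bco β t) := by
          field_simp
      _ ≤ _ := hstep
  rw [hsplit, Real.exp_add]
  calc Real.exp ((4 / (p + 1) - 2) * psiW a₀ α β δ t x) * Real.exp (2 * psiW a₀ α β δ t x)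
      ≤ (c ^ (-γ) / a₀ * (1 + t) ^ (β + (1 + β) * α / (2 - α)) * (aco a₀ α x * bco β t))
          * Real.exp (2 * psiW a₀ α β δ t x) :=
        mul_le_mul_of_nonneg_right h3 (Real.exp_pos _).le
    _ = c ^ (-γ) / a₀ * (1 + t) ^ (β + (1 + β) * α / (2 - α)) *
          (Real.exp (2 * psiW a₀ α β δ t x) * (aco a₀ α x * bco β t)) := by ring
end
end

section
/- Let n ≥ 1, α, β ≥ 0 with α + β < 1, and let p satisfy p > 1 + 2/(n−α), and p ≤ n/(n−2) if n ≥ 3. Set B := (1+β)(n−α)/(2−α) + β and σ := n(p−1)/(2(p+1)). For ε ≥ 0 define γ₁(ε) := B + 1 − ε + [β + (1+β)α/(2−α)]·(1−σ)(p+1)/2 − σ(p+1)/2 − (B−ε)(p+1)/2 and γ₂(ε) := B + 1 − ε + [β + (1+β)α/(2−α)]·(1−σ)(p+1)/2 − (B−ε)(1−σ)(p+1)/2 − (B+1−ε)σ(p+1)/2. Then there exists ε₀ > 0 such that for all 0 < ε ≤ ε₀ both γ₁(ε) < 0 and γ₂(ε) < 0. -/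
noncomputable section

open Real MeasureTheory Filter
open scoped RealInnerProductSpace ENNReal

/-- for supercritical `p`, the exponents `γ₁(ε)` and `γ₂(ε)` are negative for all
sufficiently small `ε > 0`. -/
theorem gamma_neg {n : ℕ} (hn : 1 ≤ n) (α β p : ℝ)
    (hα : 0 ≤ α) (hβ : 0 ≤ β) (hαβ : α + β < 1)
    (hpc : 1 + 2 / ((n : ℝ) - α) < p) (hpn : 3 ≤ n → p ≤ (n : ℝ) / ((n : ℝ) - 2)) :
    ∃ ε₀ > 0, ∀ ε : ℝ, 0 < ε → ε ≤ ε₀ →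
      (((1 + β) * ((n : ℝ) - α) / (2 - α) + β) + 1 - ε
        + (β + (1 + β) * α / (2 - α)) * ((1 - (n : ℝ) * (p - 1) / (2 * (p + 1))) * (p + 1) / 2)
        - ((n : ℝ) * (p - 1) / (2 * (p + 1))) * (p + 1) / 2
        - (((1 + β) * ((n : ℝ) - α) / (2 - α) + β) - ε) * ((p + 1) / 2) < 0) ∧
      (((1 + β) * ((n : ℝ) - α) / (2 - α) + β) + 1 - ε
        + (β + (1 + β) * α / (2 - α)) * ((1 - (n : ℝ) * (p - 1) / (2 * (p + 1))) * (p + 1) / 2)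
        - (((1 + β) * ((n : ℝ) - α) / (2 - α) + β) - ε)
            * ((1 - (n : ℝ) * (p - 1) / (2 * (p + 1))) * (p + 1) / 2)
        - (((1 + β) * ((n : ℝ) - α) / (2 - α) + β) + 1 - ε)
            * (((n : ℝ) * (p - 1) / (2 * (p + 1))) * (p + 1) / 2) < 0) := by
  have hn1 : (1 : ℝ) ≤ (n : ℝ) := by exact_mod_cast hn
  have hα1 : α < 1 := by linarith
  have h2α : (0:ℝ) < 2 - α := by linarith
  have hnα : (0:ℝ) < (n : ℝ) - α := by linarith
  have hp1 : 1 < p := by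
    have : (0:ℝ) < 2 / ((n : ℝ) - α) := by positivity
    linarith
  have hkey : 2 < ((n : ℝ) - α) * (p - 1) := by
    have h1 : 2 / ((n : ℝ) - α) < p - 1 := by linarith
    have := (div_lt_iff₀ hnα).mp h1
    linarith [this]
  set c : ℝ := (1 + β) * (((n : ℝ) - α) * (p - 1) - 2) / (2 - α) with hc_def
  have hc : 0 < c := by
    apply div_pos _ h2α
    apply mul_pos (by linarith) (by linarith)
  refine ⟨c / (p - 1), div_pos hc (by linarith), fun ε hε hεle => ?_⟩
  have hεc : ε * (p - 1) ≤ c := by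
    have := (le_div_iff₀ (by linarith : (0:ℝ) < p - 1)).mp hεle
    linarith
  have h2αne : (2 - α) ≠ 0 := ne_of_gt h2α
  have hp1ne : (p + 1) ≠ 0 := by positivity
  constructor
  · have hEq : (((1 + β) * ((n : ℝ) - α) / (2 - α) + β) + 1 - ε
        + (β + (1 + β) * α / (2 - α)) * ((1 - (n : ℝ) * (p - 1) / (2 * (p + 1))) * (p + 1) / 2)
        - ((n : ℝ) * (p - 1) / (2 * (p + 1))) * (p + 1) / 2
        - (((1 + β) * ((n : ℝ) - α) / (2 - α) + β) - ε) * ((p + 1) / 2))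
        = -c + ε * (p - 1) / 2 := by
      rw [hc_def]
      field_simp
      ring
    rw [hEq]; linarith
  · have hEq : (((1 + β) * ((n : ℝ) - α) / (2 - α) + β) + 1 - ε
        + (β + (1 + β) * α / (2 - α)) * ((1 - (n : ℝ) * (p - 1) / (2 * (p + 1))) * (p + 1) / 2)
        - (((1 + β) * ((n : ℝ) - α) / (2 - α) + β) - ε)
            * ((1 - (n : ℝ) * (p - 1) / (2 * (p + 1))) * (p + 1) / 2)
        - (((1 + β) * ((n : ℝ) - α) / (2 - α) + β) + 1 - ε)
            * (((n : ℝ) * (p - 1) / (2 * (p + 1))) * (p + 1) / 2))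
        = -c + ε * (p - 1) / 2 := by
      rw [hc_def]
      field_simp
      ring
    rw [hEq]; linarith
end
end
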